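/- arXiv:2210.02482 — 5 statements merged into one kernel-verified Lean document; each statement's English description precedes it below -/
import Mathlib

section
/- If V : ℝᵈ → ℝ is twice continuously differentiable with 1-Lipschitz gradient, x ∈ ℝᵈ satisfies ‖∇V(x)‖ ≤ ε, β = d/ε², the measure π_β with density proportional to exp(-βV) is well-defined, and μ_β is the Gaussian N(x, β⁻¹ I_d), then the relative Fisher information satisfies FI(μ_β ‖ π_β) = ∫ ‖∇ln μ_β - ∇ln π_β‖² dμ_β ≤ 10 β d. -/
open MeasureTheory Real


lemma gauss_moment2 {b : ℝ} (hb : 0 < b) :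
    ∫ x : ℝ, x ^ 2 * exp (-b * x ^ 2) = √(π / b) / (2 * b) := by
  have h1 : ∫ x : ℝ, x ^ 2 * exp (-b * x ^ 2)
      = 2 * ∫ x in Set.Ioi (0:ℝ), x ^ 2 * exp (-b * x ^ 2) := by
    rw [← integral_comp_abs (f := fun t => t ^ 2 * exp (-b * t ^ 2))]
    congr 1 with x
    rw [sq_abs]
  have h2 : ∫ x in Set.Ioi (0:ℝ), x ^ 2 * exp (-b * x ^ 2)
      = b ^ (-(2+1)/2 : ℝ) * (1 / 2) * Gamma ((2+1)/2) := by
    rw [← integral_rpow_mul_exp_neg_mul_rpow (by norm_num) (by norm_num : (-1:ℝ) < 2) hb]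
    refine setIntegral_congr_fun measurableSet_Ioi (fun y hy => ?_)
    rw [show ((2:ℝ)) = ((2:ℕ):ℝ) by norm_num, rpow_natCast]
  have hg : Gamma ((2+1)/2 : ℝ) = √π / 2 := by
    rw [show ((2+1)/2 : ℝ) = 1/2 + 1 by norm_num, Gamma_add_one (by norm_num),
      Gamma_one_half_eq]
    ring
  rw [h1, h2, hg]
  rw [show (-(2+1)/2 : ℝ) = (-(1/2)) + (-1) by norm_num, rpow_add hb, rpow_neg_one,
    Real.sqrt_div pi_nonneg, rpow_neg hb.le, ← sqrt_eq_rpow]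
  have hb' : (√b) ≠ 0 := ne_of_gt (sqrt_pos.mpr hb)
  field_simp


lemma pi_gauss0 (d : ℕ) {b : ℝ} (hb : 0 < b) :
    ∫ y : Fin d → ℝ, exp (-b * ∑ i, y i ^ 2) = (√(π / b)) ^ d := by
  have : ∀ y : Fin d → ℝ, exp (-b * ∑ i, y i ^ 2) = ∏ i, exp (-b * y i ^ 2) := by
    intro y
    rw [← Real.exp_sum, Finset.mul_sum]
  simp_rw [this]
  rw [volume_pi, integral_fintype_prod_eq_pow (ι := Fin d) (fun t : ℝ => exp (-b * t ^ 2)),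
    integral_gaussian, Fintype.card_fin]

lemma pi_gauss2 (d : ℕ) {b : ℝ} (hb : 0 < b) :
    ∫ y : Fin d → ℝ, (∑ i, y i ^ 2) * exp (-b * ∑ i, y i ^ 2)
      = (d / (2 * b)) * (√(π / b)) ^ d := by
  have key : ∀ y : Fin d → ℝ, (∑ i, y i ^ 2) * exp (-b * ∑ i, y i ^ 2)
      = ∑ i, ∏ j, ((if j = i then (y j) ^ 2 else 1) * exp (-b * (y j) ^ 2)) := by
    intro y
    rw [Finset.sum_congr rfl (fun i _ => Finset.prod_mul_distrib), ← Finset.sum_mul]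
    · congr 1
      · rw [Finset.sum_congr rfl (fun i _ => Finset.prod_ite_eq' Finset.univ i (fun j => (y j)^2))]
        simp
      · rw [← Real.exp_sum, Finset.mul_sum]
  simp_rw [key]
  rw [integral_finset_sum]
  · have : ∀ i : Fin d,
        (∫ y : Fin d → ℝ, ∏ j, ((if j = i then (y j) ^ 2 else 1) * exp (-b * (y j) ^ 2)))
        = (1 / (2*b)) * (√(π / b)) ^ d := by
      intro i
      rw [volume_pi, integral_fintype_prod_eq_prod (ι := Fin d)
        (fun j (t : ℝ) => (if j = i then t ^ 2 else 1) * exp (-b * t ^ 2))]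
      have : ∀ j : Fin d, (∫ t : ℝ, (if j = i then t ^ 2 else 1) * exp (-b * t ^ 2))
          = (if j = i then 1/(2*b) else 1) * √(π / b) := by
        intro j
        by_cases h : j = i <;> simp only [h, if_true, if_false, one_mul]
        · rw [gauss_moment2 hb]; ring
        · exact integral_gaussian b
      simp_rw [this]
      rw [Finset.prod_mul_distrib, Finset.prod_ite_eq' Finset.univ i (fun _ => 1/(2*b)),
        Finset.prod_const, Finset.card_univ, Fintype.card_fin]
      simp
    simp_rw [this]
    rw [Finset.sum_const, Finset.card_univ, Fintype.card_fin, nsmul_eq_mul]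
    ring
  · intro i _
    apply Integrable.fintype_prod (f := fun j (t:ℝ) => (if j = i then t ^ 2 else 1) * exp (-b * t ^ 2))
    intro j
    by_cases h : j = i <;> simp only [h, if_true, if_false, one_mul]
    · have h2 := integrable_rpow_mul_exp_neg_mul_sq hb (s := ((2:ℕ):ℝ)) (by norm_num)
      simp_rw [rpow_natCast] at h2
      exact h2
    · exact integrable_exp_neg_mul_sq hb


lemma eucl_norm_sq' (d : ℕ) (y : EuclideanSpace ℝ (Fin d)) :
    ‖y‖ ^ 2 = ∑ i, ((MeasurableEquiv.toLp 2 (Fin d → ℝ)).symm y) i ^ 2 := by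
  rw [EuclideanSpace.norm_eq, sq_sqrt (by positivity)]
  simp [Real.norm_eq_abs, sq_abs]

lemma pi_int0 (d : ℕ) {b : ℝ} (hb : 0 < b) :
    Integrable (fun y : Fin d → ℝ => exp (-b * ∑ i, y i ^ 2)) := by
  have : ∀ y : Fin d → ℝ, exp (-b * ∑ i, y i ^ 2) = ∏ i, exp (-b * y i ^ 2) := by
    intro y; rw [← Real.exp_sum, Finset.mul_sum]
  simp_rw [this]
  exact Integrable.fintype_prod (f := fun _ (t : ℝ) => exp (-b * t ^ 2))
    (fun _ => integrable_exp_neg_mul_sq hb)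

lemma pi_int2 (d : ℕ) {b : ℝ} (hb : 0 < b) :
    Integrable (fun y : Fin d → ℝ => (∑ i, y i ^ 2) * exp (-b * ∑ i, y i ^ 2)) := by
  have key : ∀ y : Fin d → ℝ, (∑ i, y i ^ 2) * exp (-b * ∑ i, y i ^ 2)
      = ∑ i, ∏ j, ((if j = i then (y j) ^ 2 else 1) * exp (-b * (y j) ^ 2)) := by
    intro y
    rw [Finset.sum_congr rfl (fun i _ => Finset.prod_mul_distrib), ← Finset.sum_mul]
    congr 1
    · rw [Finset.sum_congr rfl (fun i _ => Finset.prod_ite_eq' Finset.univ i (fun j => (y j)^2))]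
      simp
    · rw [← Real.exp_sum, Finset.mul_sum]
  simp_rw [key]
  refine integrable_finset_sum _ (fun i _ => ?_)
  apply Integrable.fintype_prod (f := fun j (t:ℝ) => (if j = i then t ^ 2 else 1) * exp (-b * t ^ 2))
  intro j
  by_cases h : j = i <;> simp only [h, if_true, if_false, one_mul]
  · have h2 := integrable_rpow_mul_exp_neg_mul_sq hb (s := ((2:ℕ):ℝ)) (by norm_num)
    simp_rw [rpow_natCast] at h2
    exact h2
  · exact integrable_exp_neg_mul_sq hb

lemma eucl_int0 (d : ℕ) {b : ℝ} (hb : 0 < b) (x : EuclideanSpace ℝ (Fin d)) :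
    Integrable (fun y : EuclideanSpace ℝ (Fin d) => exp (-b * ‖y - x‖ ^ 2)) := by
  have h : Integrable (fun y : EuclideanSpace ℝ (Fin d) => exp (-b * ‖y‖ ^ 2)) := by
    have := ((EuclideanSpace.volume_preserving_symm_measurableEquiv_toLp (Fin d)).integrable_comp_emb
      ((MeasurableEquiv.toLp 2 (Fin d → ℝ)).symm).measurableEmbedding
      (g := fun z : Fin d → ℝ => exp (-b * ∑ i, z i ^ 2))).mpr (pi_int0 d hb)
    simp_rw [Function.comp_def, ← eucl_norm_sq'] at this
    exact this
  exact h.comp_sub_right x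

lemma eucl_int2 (d : ℕ) {b : ℝ} (hb : 0 < b) (x : EuclideanSpace ℝ (Fin d)) :
    Integrable (fun y : EuclideanSpace ℝ (Fin d) => ‖y - x‖ ^ 2 * exp (-b * ‖y - x‖ ^ 2)) := by
  have h : Integrable (fun y : EuclideanSpace ℝ (Fin d) => ‖y‖ ^ 2 * exp (-b * ‖y‖ ^ 2)) := by
    have := ((EuclideanSpace.volume_preserving_symm_measurableEquiv_toLp (Fin d)).integrable_comp_emb
      ((MeasurableEquiv.toLp 2 (Fin d → ℝ)).symm).measurableEmbedding
      (g := fun z : Fin d → ℝ => (∑ i, z i ^ 2) * exp (-b * ∑ i, z i ^ 2))).mpr (pi_int2 d hb)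
    simp_rw [Function.comp_def, ← eucl_norm_sq'] at this
    exact this
  exact h.comp_sub_right x

lemma eucl_gauss0 (d : ℕ) {b : ℝ} (hb : 0 < b) (x : EuclideanSpace ℝ (Fin d)) :
    ∫ y : EuclideanSpace ℝ (Fin d), exp (-b * ‖y - x‖ ^ 2) = (√(π / b)) ^ d := by
  rw [integral_sub_right_eq_self (μ := volume) (fun y => exp (-b * ‖y‖ ^ 2)) x]
  simp_rw [eucl_norm_sq']
  rw [(EuclideanSpace.volume_preserving_symm_measurableEquiv_toLp (Fin d)).integral_comp'
    (fun z : Fin d → ℝ => exp (-b * ∑ i, z i ^ 2)), pi_gauss0 d hb]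

lemma eucl_gauss2 (d : ℕ) {b : ℝ} (hb : 0 < b) (x : EuclideanSpace ℝ (Fin d)) :
    ∫ y : EuclideanSpace ℝ (Fin d), ‖y - x‖ ^ 2 * exp (-b * ‖y - x‖ ^ 2)
      = (d / (2 * b)) * (√(π / b)) ^ d := by
  rw [integral_sub_right_eq_self (μ := volume) (fun y => ‖y‖ ^ 2 * exp (-b * ‖y‖ ^ 2)) x]
  simp_rw [eucl_norm_sq']
  rw [(EuclideanSpace.volume_preserving_symm_measurableEquiv_toLp (Fin d)).integral_comp'
    (fun z : Fin d → ℝ => (∑ i, z i ^ 2) * exp (-b * ∑ i, z i ^ 2)), pi_gauss2 d hb]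

theorem stmt0 (d : ℕ) (hd : 1 ≤ d)
    (V : EuclideanSpace ℝ (Fin d) → ℝ) (ε β : ℝ) (hε : 0 < ε)
    (hV : ContDiff ℝ 2 V) (hLip : LipschitzWith 1 (gradient V))
    (x : EuclideanSpace ℝ (Fin d)) (hx : ‖gradient V x‖ ≤ ε)
    (hβ : β = d / ε ^ 2)
    (hint : Integrable (fun y => Real.exp (-β * V y)))
    (μβ : Measure (EuclideanSpace ℝ (Fin d)))
    (hμβ : μβ = volume.withDensity
      (fun y => ENNReal.ofReal ((β / (2 * π)) ^ ((d : ℝ) / 2)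
        * Real.exp (-β * ‖y - x‖ ^ 2 / 2)))) :
    ∫ y, ‖β • gradient V y - β • (y - x)‖ ^ 2 ∂μβ ≤ 10 * β * d := by
  have hdpos : (0:ℝ) < d := by exact_mod_cast hd
  have hβpos : 0 < β := hβ ▸ div_pos hdpos (by positivity)
  have hβε : β * ε ^ 2 = d := by rw [hβ]; field_simp
  set c : ℝ := (β / (2 * π)) ^ ((d : ℝ) / 2) with hc
  have hcpos : 0 < c := rpow_pos_of_pos (div_pos hβpos (by positivity)) _
  set g : EuclideanSpace ℝ (Fin d) → ℝ :=
    fun y => c * Real.exp (-β * ‖y - x‖ ^ 2 / 2) with hg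
  have hgcont : Continuous g := by
    apply continuous_const.mul
    exact Real.continuous_exp.comp (by fun_prop)
  have hgnn : ∀ y, 0 ≤ g y := fun y => by positivity
  have hb2 : (0:ℝ) < β / 2 := by linarith
  have hexp : ∀ y : EuclideanSpace ℝ (Fin d),
      Real.exp (-β * ‖y - x‖ ^ 2 / 2) = Real.exp (-(β/2) * ‖y - x‖ ^ 2) := by
    intro y; congr 1; ring
  -- rewrite the measure
  have hμβ' : μβ = volume.withDensity (fun y => (ENNReal.ofNNReal ((g y).toNNReal))) := hμβ
  have hmeas : Measurable (fun y => (g y).toNNReal) := hgcont.measurable.real_toNNReal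
  -- normalization constant
  have hK : c * (√(π / (β/2))) ^ d = 1 := by
    have h1 : (√(π / (β/2))) ^ d = (2 * π / β) ^ ((d:ℝ)/2) := by
      rw [show π / (β/2) = 2 * π / β by ring, sqrt_eq_rpow,
        ← rpow_natCast ((2 * π / β) ^ ((1:ℝ)/2)) d, ← rpow_mul (by positivity)]
      congr 1; ring
    rw [h1, hc, ← mul_rpow (by positivity) (by positivity),
      show β / (2 * π) * (2 * π / β) = 1 by field_simp, one_rpow]
  -- the dominating function
  set G : EuclideanSpace ℝ (Fin d) → ℝ :=
    fun y => 2 * β^2 * ε^2 + 8 * β^2 * ‖y - x‖^2 with hG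
  -- pointwise bound
  have hpt : ∀ y, ‖β • gradient V y - β • (y - x)‖ ^ 2 ≤ G y := by
    intro y
    have h1 : ‖β • gradient V y - β • (y - x)‖ = β * ‖gradient V y - (y - x)‖ := by
      rw [← smul_sub, norm_smul, Real.norm_eq_abs, abs_of_pos hβpos]
    have h2 : ‖gradient V y - (y - x)‖ ≤ ε + 2 * ‖y - x‖ := by
      have hlip : ‖gradient V y - gradient V x‖ ≤ ‖y - x‖ := by
        have := hLip.dist_le_mul y x
        simpa [dist_eq_norm] using this
      calc ‖gradient V y - (y - x)‖
          = ‖(gradient V y - gradient V x) + gradient V x - (y - x)‖ := by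
            congr 1; abel
        _ ≤ ‖(gradient V y - gradient V x) + gradient V x‖ + ‖y - x‖ := norm_sub_le _ _
        _ ≤ ‖gradient V y - gradient V x‖ + ‖gradient V x‖ + ‖y - x‖ := by
            gcongr; exact norm_add_le _ _
        _ ≤ ‖y - x‖ + ε + ‖y - x‖ := by gcongr
        _ = ε + 2 * ‖y - x‖ := by ring
    rw [h1, mul_pow]
    have h3 : ‖gradient V y - (y - x)‖^2 ≤ (ε + 2 * ‖y - x‖)^2 := by
      apply sq_le_sq' _ h2
      nlinarith [norm_nonneg (gradient V y - (y - x)), hε.le, norm_nonneg (y - x)]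
    have h4 : (ε + 2 * ‖y - x‖)^2 ≤ 2 * ε^2 + 8 * ‖y - x‖^2 := by
      nlinarith [sq_nonneg (ε - 2 * ‖y - x‖)]
    have h5 := mul_le_mul_of_nonneg_left (h3.trans h4) (sq_nonneg β)
    show β ^ 2 * ‖gradient V y - (y - x)‖ ^ 2 ≤ 2 * β^2 * ε^2 + 8 * β^2 * ‖y - x‖^2
    nlinarith [h5]
  -- integrability of G wrt μβ
  have hGvol : Integrable (fun y => (g y).toNNReal • G y) volume := by
    have heq : (fun y : EuclideanSpace ℝ (Fin d) => (g y).toNNReal • G y)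
        = fun y => (2 * β^2 * ε^2 * c) * Real.exp (-(β/2) * ‖y - x‖^2)
          + (8 * β^2 * c) * (‖y - x‖^2 * Real.exp (-(β/2) * ‖y - x‖^2)) := by
      funext y
      rw [NNReal.smul_def, Real.coe_toNNReal _ (hgnn y)]
      simp only [hg, hG, hexp y, smul_eq_mul]
      ring
    rw [heq]
    exact ((eucl_int0 d hb2 x).const_mul _).add ((eucl_int2 d hb2 x).const_mul _)
  have hGint : Integrable G μβ := by
    rw [hμβ']
    exact (integrable_withDensity_iff_integrable_smul hmeas).mpr hGvol
  -- integral of G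
  have hGval : ∫ y, G y ∂μβ = 10 * β * d := by
    rw [hμβ', integral_withDensity_eq_integral_smul hmeas]
    have heq : (fun y : EuclideanSpace ℝ (Fin d) => (g y).toNNReal • G y)
        = fun y => (2 * β^2 * ε^2 * c) * Real.exp (-(β/2) * ‖y - x‖^2)
          + (8 * β^2 * c) * (‖y - x‖^2 * Real.exp (-(β/2) * ‖y - x‖^2)) := by
      funext y
      rw [NNReal.smul_def, Real.coe_toNNReal _ (hgnn y)]
      simp only [hg, hG, hexp y, smul_eq_mul]
      ring
    rw [heq, integral_add (((eucl_int0 d hb2 x).const_mul _))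
      ((eucl_int2 d hb2 x).const_mul _), integral_const_mul, integral_const_mul,
      eucl_gauss0 d hb2 x, eucl_gauss2 d hb2 x]
    have e1 : 2 * β^2 * ε^2 * c * (√(π / (β/2))) ^ d = 2 * β * d := by
      rw [mul_assoc (2 * β^2 * ε^2), hK, mul_one,
        show 2*β^2*ε^2 = 2*β*(β*ε^2) by ring, hβε]
    have e2 : 8 * β^2 * c * ((d / (2 * (β/2))) * (√(π / (β/2))) ^ d) = 8 * β * d := by
      rw [show (d:ℝ) / (2 * (β/2)) * (√(π / (β/2))) ^ d
          = (d / β) * (c⁻¹ * (c * (√(π / (β/2))) ^ d)) by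
        field_simp, hK]
      field_simp
    rw [e1, e2]; ring
  calc ∫ y, ‖β • gradient V y - β • (y - x)‖ ^ 2 ∂μβ ≤ ∫ y, G y ∂μβ := by
        apply integral_mono_of_nonneg
        · exact Filter.Eventually.of_forall (fun y => by positivity)
        · exact hGint
        · exact Filter.Eventually.of_forall hpt
    _ = 10 * β * d := hGval
end

section
/- Let φ : ℝ₊ → ℝ₊ be continuous, decreasing, supported on [0,1], twice continuously differentiable on (0,∞), with φ(x) = φ(0) - x²/2 on [0,α] for some α > 0, and sup_{x>0} |φ''(x)| ≤ 1. Then the function x ↦ φ(‖x‖) on ℝᵈ is 1-smooth, i.e., its gradient is 1-Lipschitz. -/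
open Real Set
open scoped RealInnerProductSpace

theorem aux_norm_fderiv' {E : Type*} [NormedAddCommGroup E] [InnerProductSpace ℝ E] {x : E}
    (hx : x ≠ 0) :
    HasFDerivAt (fun y : E => ‖y‖) (‖x‖⁻¹ • innerSL ℝ x) x := by
  have hr : (0:ℝ) < ‖x‖ := norm_pos_iff.mpr hx
  have h1 : HasFDerivAt (fun y : E => ‖y‖ ^ 2) (2 • innerSL ℝ x) x :=
    (hasStrictFDerivAt_norm_sq x).hasFDerivAt
  have h2 : HasDerivAt Real.sqrt (1 / (2 * Real.sqrt (‖x‖^2))) (‖x‖^2) :=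
    Real.hasDerivAt_sqrt (by positivity)
  have h3 := h2.comp_hasFDerivAt x h1
  have h4 : (Real.sqrt ∘ fun y : E => ‖y‖ ^ 2) = fun y : E => ‖y‖ := by
    ext y; simp [Function.comp, Real.sqrt_sq (norm_nonneg y)]
  rw [h4] at h3
  refine h3.congr_fderiv ?_
  rw [Real.sqrt_sq hr.le]
  ext v
  simp [two_smul]
  field_simp
  ring

theorem aux_opnorm' {E : Type*} [NormedAddCommGroup E] [InnerProductSpace ℝ E]
    (x : E) (a c : ℝ) (ha : |a| ≤ 1) (hac : |a + c * ‖x‖ ^ 2| ≤ 1) (v : E) :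
    ‖a • v + (c * ⟪x, v⟫) • x‖ ≤ ‖v‖ := by
  set s : ℝ := ⟪x, v⟫ with hs
  have hcs : s ^ 2 ≤ ‖x‖ ^ 2 * ‖v‖ ^ 2 := by
    have h := real_inner_mul_inner_self_le x v
    rw [real_inner_self_eq_norm_sq, real_inner_self_eq_norm_sq] at h
    calc s ^ 2 = s * s := sq s
      _ ≤ ‖x‖ ^ 2 * ‖v‖ ^ 2 := by rw [show ‖x‖^2*‖v‖^2 = ‖x‖^2 * ‖v‖^2 from rfl]; exact h
  have hexp : ‖a • v + (c * s) • x‖ ^ 2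
      = a ^ 2 * ‖v‖ ^ 2 + (2 * a * c + c ^ 2 * ‖x‖ ^ 2) * s ^ 2 := by
    rw [norm_add_sq_real, real_inner_smul_left, real_inner_smul_right,
      norm_smul, norm_smul]
    have hvx : (inner ℝ v x : ℝ) = s := by rw [hs]; exact real_inner_comm x v
    simp only [Real.norm_eq_abs, mul_pow, sq_abs, hvx]
    ring
  have ha2 : a ^ 2 ≤ 1 := by nlinarith [abs_nonneg a, abs_le.mp ha]
  have hac2 : (a + c * ‖x‖ ^ 2) ^ 2 ≤ 1 := by nlinarith [abs_nonneg (a + c*‖x‖^2), abs_le.mp hac]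
  have hsq : ‖a • v + (c * s) • x‖ ^ 2 ≤ ‖v‖ ^ 2 := by
    rw [hexp]
    rcases le_or_gt 0 (2 * a * c + c ^ 2 * ‖x‖ ^ 2) with h | h
    · nlinarith [mul_le_mul_of_nonneg_left hcs h, sq_nonneg ‖v‖, sq_nonneg ‖x‖,
        mul_nonneg (sq_nonneg ‖x‖) (sq_nonneg ‖v‖)]
    · nlinarith [mul_nonpos_of_nonpos_of_nonneg h.le (sq_nonneg s), sq_nonneg ‖v‖]
  have := Real.sqrt_le_sqrt hsq
  rwa [Real.sqrt_sq (norm_nonneg _), Real.sqrt_sq (norm_nonneg _)] at this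

theorem aux_deriv_Ioo'' (φ : ℝ → ℝ) (α : ℝ)
    (hquad : ∀ x ∈ Icc 0 α, φ x = φ 0 - x ^ 2 / 2) {r : ℝ} (hr : r ∈ Ioo 0 α) :
    deriv φ r = -r := by
  have hev : φ =ᶠ[nhds r] (fun t => φ 0 - t ^ 2 / 2) := by
    filter_upwards [Ioo_mem_nhds hr.1 hr.2] with t ht
    exact hquad t ⟨ht.1.le, ht.2.le⟩
  rw [hev.deriv_eq]
  have h : HasDerivAt (fun t : ℝ => φ 0 - t ^ 2 / 2) (0 - ((2:ℕ) * r ^ (2-1)) / 2) r :=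
    (hasDerivAt_const r (φ 0)).sub ((hasDerivAt_pow 2 r).div_const 2)
  rw [h.deriv]
  push_cast
  ring

theorem aux_lipschitz' (φ : ℝ → ℝ) (hC2 : ContDiffOn ℝ 2 φ (Ioi 0))
    (hdd : ∀ x > (0 : ℝ), |deriv (deriv φ) x| ≤ 1) :
    LipschitzOnWith 1 (deriv φ) (Ioi (0:ℝ)) := by
  have h1 : ContDiffOn ℝ 1 (derivWithin φ (Ioi 0)) (Ioi 0) :=
    hC2.derivWithin isOpen_Ioi.uniqueDiffOn (by norm_num)
  have h2 : ContDiffOn ℝ 1 (deriv φ) (Ioi 0) :=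
    h1.congr fun x hx => (derivWithin_of_isOpen isOpen_Ioi hx).symm
  have hdiff : ∀ x ∈ Ioi (0:ℝ), DifferentiableAt ℝ (deriv φ) x := fun x hx =>
    ((h2.differentiableOn one_ne_zero).differentiableAt (isOpen_Ioi.mem_nhds hx))
  exact (convex_Ioi 0).lipschitzOnWith_of_nnnorm_deriv_le hdiff (fun x hx => by
    have := hdd x hx
    rw [← Real.norm_eq_abs, ← coe_nnnorm] at this
    exact_mod_cast this)

theorem aux_deriv_bound' (φ : ℝ → ℝ) (α : ℝ) (hα : 0 < α)
    (hC2 : ContDiffOn ℝ 2 φ (Ioi 0))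
    (hquad : ∀ x ∈ Icc 0 α, φ x = φ 0 - x ^ 2 / 2)
    (hdd : ∀ x > (0 : ℝ), |deriv (deriv φ) x| ≤ 1) :
    ∀ r > (0:ℝ), |deriv φ r| ≤ r := by
  have hlip := aux_lipschitz' φ hC2 hdd
  have hK : ∀ s t : ℝ, 0 < s → 0 < t → |deriv φ s - deriv φ t| ≤ |s - t| := by
    intro s t hs ht
    have h := hlip.dist_le_mul (x := s) (y := t) hs ht
    simpa [Real.dist_eq] using h
  have halpha : deriv φ α = -α := by
    by_contra hne
    set ε := |deriv φ α + α| with hε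
    have hεpos : 0 < ε := by
      rw [hε, abs_pos]
      intro h; apply hne; linarith
    set s := α - min (α/2) (ε/4) with hs
    have hmin : 0 < min (α/2) (ε/4) := lt_min (by linarith) (by linarith)
    have hminle : min (α/2) (ε/4) ≤ α/2 := min_le_left _ _
    have hminle' : min (α/2) (ε/4) ≤ ε/4 := min_le_right _ _
    have hs0 : 0 < s := by rw [hs]; linarith
    have hsα : s < α := by rw [hs]; linarith
    have h1 : deriv φ s = -s := aux_deriv_Ioo'' φ α hquad ⟨hs0, hsα⟩
    have h2 := hK α s hα hs0
    rw [h1, sub_neg_eq_add] at h2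
    have h3 : |α - s| = α - s := abs_of_nonneg (by linarith)
    rw [h3] at h2
    have h4 : deriv φ α + α = (deriv φ α + s) + (α - s) := by ring
    have h5 : ε ≤ |deriv φ α + s| + |α - s| := by
      rw [hε, h4]; exact abs_add_le _ _
    rw [h3] at h5
    have : ε ≤ 2 * (α - s) := by linarith
    rw [hs] at this
    linarith
  intro r hr
  rcases lt_trichotomy r α with h | h | h
  · rw [aux_deriv_Ioo'' φ α hquad ⟨hr, h⟩, abs_neg, abs_of_pos hr]
  · rw [h, halpha, abs_neg, abs_of_pos hα]
  · have h2 := hK r α hr hα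
    rw [halpha, sub_neg_eq_add] at h2
    have h3 : |r - α| = r - α := abs_of_nonneg (by linarith)
    rw [h3] at h2
    have h4 : deriv φ r = (deriv φ r + α) + (-α) := by ring
    calc |deriv φ r| = |(deriv φ r + α) + (-α)| := by rw [show (deriv φ r + α) + (-α) = deriv φ r from by ring]
      _ ≤ |deriv φ r + α| + |(-α)| := abs_add_le _ _
      _ ≤ (r - α) + α := by rw [abs_neg, abs_of_pos hα]; linarith
      _ = r := by ring

theorem stmt6 (d : ℕ) (φ : ℝ → ℝ) (α : ℝ) (hα : 0 < α)
    (hcont : ContinuousOn φ (Ici 0))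
    (hnonneg : ∀ x ≥ (0 : ℝ), 0 ≤ φ x)
    (hdec : AntitoneOn φ (Ici 0))
    (hsupp : ∀ x > (1 : ℝ), φ x = 0)
    (hC2 : ContDiffOn ℝ 2 φ (Ioi 0))
    (hquad : ∀ x ∈ Icc 0 α, φ x = φ 0 - x ^ 2 / 2)
    (hdd : ∀ x > (0 : ℝ), |deriv (deriv φ) x| ≤ 1) :
    LipschitzWith 1 (gradient (fun x : EuclideanSpace ℝ (Fin d) => φ ‖x‖)) := by
  have hd1 : ∀ r > (0:ℝ), |deriv φ r| ≤ r := aux_deriv_bound' φ α hα hC2 hquad hdd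
  have hIoo : ∀ r : ℝ, 0 < r → r < α → deriv φ r = -r := fun r h1 h2 =>
    aux_deriv_Ioo'' φ α hquad ⟨h1, h2⟩
  have h2' : ContDiffOn ℝ 1 (deriv φ) (Ioi 0) :=
    (hC2.derivWithin isOpen_Ioi.uniqueDiffOn (by norm_num)).congr
      fun x hx => (derivWithin_of_isOpen isOpen_Ioi hx).symm
  have hφd : ∀ r : ℝ, 0 < r → HasDerivAt φ (deriv φ r) r := fun r hr =>
    ((hC2.differentiableOn (by norm_num)).differentiableAt (isOpen_Ioi.mem_nhds hr)).hasDerivAt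
  have hφdd : ∀ r : ℝ, 0 < r → HasDerivAt (deriv φ) (deriv (deriv φ) r) r := fun r hr =>
    ((h2'.differentiableOn one_ne_zero).differentiableAt (isOpen_Ioi.mem_nhds hr)).hasDerivAt
  set E := EuclideanSpace ℝ (Fin d) with hE
  set g : E → E := fun x => (deriv φ ‖x‖ / ‖x‖) • x with hg
  have hgsmall : ∀ y : E, ‖y‖ < α → g y = -y := by
    intro y hy
    by_cases h0 : y = 0
    · simp [hg, h0]
    · have hr : 0 < ‖y‖ := norm_pos_iff.mpr h0
      rw [hg]
      dsimp only
      rw [hIoo _ hr hy, neg_div, div_self hr.ne', neg_smul, one_smul]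
  -- gradient computation
  have hfd : ∀ x : E, HasFDerivAt (fun y : E => φ ‖y‖)
      ((InnerProductSpace.toDual ℝ E) (g x)) x := by
    intro x
    rcases lt_or_ge ‖x‖ α with hxα | hxα
    · -- quadratic region
      have hball : Metric.ball (0 : E) α ∈ nhds x :=
        Metric.isOpen_ball.mem_nhds (by simpa [Metric.mem_ball, dist_zero_right] using hxα)
      have hev : (fun y : E => φ ‖y‖) =ᶠ[nhds x] (fun y : E => φ 0 - ‖y‖ ^ 2 / 2) := by
        filter_upwards [hball] with y hy
        rw [Metric.mem_ball, dist_zero_right] at hy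
        exact hquad ‖y‖ ⟨norm_nonneg y, hy.le⟩
      have hq : HasFDerivAt (fun y : E => φ 0 - ‖y‖ ^ 2 / 2) (-(innerSL ℝ x)) x := by
        have h2 := (hasStrictFDerivAt_norm_sq x).hasFDerivAt
        have h4 := (hasFDerivAt_const (φ 0) x).sub (h2.const_smul (1/2 : ℝ))
        have hfun : (fun y : E => φ 0 - ‖y‖ ^ 2 / 2)
            = (fun y : E => φ 0 - (1/2 : ℝ) • ‖y‖ ^ 2) := by
          funext y; simp [smul_eq_mul]; ring
        rw [hfun]
        refine h4.congr_fderiv ?_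
        ext v
        simp [two_smul, smul_eq_mul]
        ring
      have hmain := hq.congr_of_eventuallyEq hev
      have heq : (InnerProductSpace.toDual ℝ E) (g x) = -(innerSL ℝ x) := by
        rw [hgsmall x hxα]
        ext v
        simp [inner_neg_left]
      rw [heq]
      exact hmain
    · -- radial region
      have hr : 0 < ‖x‖ := lt_of_lt_of_le hα hxα
      have hx0 : x ≠ 0 := by intro h; rw [h] at hr; simp at hr
      have hN := aux_norm_fderiv' hx0
      have h := (hφd ‖x‖ hr).comp_hasFDerivAt x hN
      have heq : (InnerProductSpace.toDual ℝ E) (g x)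
          = deriv φ ‖x‖ • (‖x‖⁻¹ • innerSL ℝ x) := by
        ext v
        rw [hg]
        simp [real_inner_smul_left, div_eq_mul_inv]
        ring
      rw [heq]
      exact h
  have hgradeq : gradient (fun x : E => φ ‖x‖) = g := by
    funext x
    exact HasGradientAt.gradient (hfd x)
  rw [hgradeq]
  -- Lipschitz of g via fderiv bound
  have key : ∀ x : E, ∃ L : E →L[ℝ] E, HasFDerivAt g L x ∧ ‖L‖ ≤ 1 := by
    intro x
    rcases lt_or_ge ‖x‖ α with hxα | hxα
    · refine ⟨-(ContinuousLinearMap.id ℝ E), ?_, ?_⟩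
      · have hball : Metric.ball (0 : E) α ∈ nhds x :=
          Metric.isOpen_ball.mem_nhds (by simpa [Metric.mem_ball, dist_zero_right] using hxα)
        have hev : g =ᶠ[nhds x] (fun y : E => -y) := by
          filter_upwards [hball] with y hy
          rw [Metric.mem_ball, dist_zero_right] at hy
          exact hgsmall y hy
        exact ((hasFDerivAt_id x).neg).congr_of_eventuallyEq hev
      · rw [norm_neg]
        exact ContinuousLinearMap.norm_id_le
    · have hr : 0 < ‖x‖ := lt_of_lt_of_le hα hxα
      have hx0 : x ≠ 0 := by intro h; rw [h] at hr; simp at hr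
      have hN := aux_norm_fderiv' hx0
      set r := ‖x‖ with hrdef
      set b := (deriv (deriv φ) r * r - deriv φ r * 1) / r ^ 2 with hb
      have hB : HasDerivAt (fun t => deriv φ t / t) b r :=
        (hφdd r hr).div (hasDerivAt_id r) hr.ne'
      have hBx : HasFDerivAt (fun y : E => deriv φ ‖y‖ / ‖y‖) (b • (r⁻¹ • innerSL ℝ x)) x :=
        hB.comp_hasFDerivAt (h₂ := fun t => deriv φ t / t) x hN
      have hL := hBx.smul (hasFDerivAt_id x)
      refine ⟨_, hL, ?_⟩
      apply ContinuousLinearMap.opNorm_le_bound _ zero_le_one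
      intro v
      rw [one_mul]
      have hLv : ((deriv φ ‖x‖ / ‖x‖) • ContinuousLinearMap.id ℝ E
          + (b • (r⁻¹ • innerSL ℝ x)).smulRight (id x)) v
          = (deriv φ r / r) • v + ((b * r⁻¹) * ⟪x, v⟫) • x := by
        simp [ContinuousLinearMap.smulRight_apply, mul_assoc]
        rfl
      rw [hLv]
      apply aux_opnorm' x (deriv φ r / r) (b * r⁻¹) ?_ ?_ v
      · rw [abs_div, abs_of_pos hr, div_le_one hr]
        exact hd1 r hr
      · have heq : deriv φ r / r + (b * r⁻¹) * ‖x‖ ^ 2 = deriv (deriv φ) r := by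
          rw [hb, ← hrdef]
          field_simp
          ring
        rw [heq]
        exact hdd r hr
  have hdiffg : Differentiable ℝ g := fun x => ((key x).choose_spec.1).differentiableAt
  apply lipschitzWith_of_nnnorm_fderiv_le (𝕜 := ℝ) hdiffg
  intro x
  rw [(key x).choose_spec.1.fderiv]
  have h1 := (key x).choose_spec.2
  rw [← NNReal.coe_le_coe, coe_nnnorm]
  exact_mod_cast h1
end

section
/- With π̃_ω(x) = exp(r²φ(‖x-ω‖/r) - (1/2)((‖x‖-R)₊)²), ‖ω‖ ≤ R - r, and φ decreasing and supported on [0,1], if the parameters satisfy (I_r + V_d)rᵈ = π̃_ω(ℝᵈ∖B_R) + V_d Rᵈ where I_r = ∫_{B₁} exp(r²φ(‖x‖)) dx and V_d is the volume of the unit ball, then the normalized measure π_ω = π̃_ω / Z_ω satisfies π_ω(ω + B_r) = 1/2. -/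
open MeasureTheory Real Set

theorem stmt9 (d : ℕ) (hd : 1 ≤ d) (φ : ℝ → ℝ)
    (hnn : ∀ x ≥ (0 : ℝ), 0 ≤ φ x)
    (hdec : AntitoneOn φ (Ici 0))
    (hsupp : ∀ x > (1 : ℝ), φ x = 0)
    (r R : ℝ) (hr : 0 < r) (hrR : r ≤ R)
    (ω : EuclideanSpace ℝ (Fin d)) (hω : ‖ω‖ ≤ R - r)
    (πt : EuclideanSpace ℝ (Fin d) → ℝ)
    (hπt : πt = fun x =>
      Real.exp (r ^ 2 * φ (‖x - ω‖ / r) - (1 / 2) * (max (‖x‖ - R) 0) ^ 2))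
    (hint : Integrable πt)
    (Ir Vd : ℝ)
    (hIr : Ir = ∫ x in Metric.closedBall (0 : EuclideanSpace ℝ (Fin d)) 1,
      Real.exp (r ^ 2 * φ ‖x‖))
    (hVd : Vd = (volume (Metric.closedBall (0 : EuclideanSpace ℝ (Fin d)) 1)).toReal)
    (hbal : (Ir + Vd) * r ^ d =
      (∫ x in (Metric.closedBall (0 : EuclideanSpace ℝ (Fin d)) R)ᶜ, πt x) + Vd * R ^ d) :
    ∫ x in Metric.closedBall ω r, πt x = (1 / 2) * ∫ x, πt x := by
  let E := EuclideanSpace ℝ (Fin d)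
  set A : Set E := Metric.closedBall ω r with hA
  set B : Set E := Metric.closedBall (0 : E) R with hB
  have hfr : Module.finrank ℝ E = d := finrank_euclideanSpace_fin
  have hR0 : (0:ℝ) ≤ R := le_trans hr.le hrR
  -- membership facts
  have hmemA : ∀ x : E, x ∈ A ↔ ‖x - ω‖ ≤ r := by
    intro x; simp [hA, Metric.mem_closedBall, dist_eq_norm]; exact iff_of_eq (congrArg (· ≤ r) (dist_eq_norm x ω))
  have hmemB : ∀ x : E, x ∈ B ↔ ‖x‖ ≤ R := by
    intro x; simp [hB, Metric.mem_closedBall, dist_eq_norm]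
  have hAB : A ⊆ B := by
    intro x hx
    rw [hmemA] at hx; rw [hmemB]
    calc ‖x‖ = ‖(x - ω) + ω‖ := by rw [sub_add_cancel]
    _ ≤ ‖x - ω‖ + ‖ω‖ := norm_add_le _ _
    _ ≤ r + (R - r) := add_le_add hx hω
    _ = R := by ring
  -- Step A : ∫ over A equals r^d * Ir
  have hnorm_inv : ∀ v : E, ‖r⁻¹ • v‖ = ‖v‖ / r := by
    intro v
    rw [norm_smul, norm_inv, Real.norm_eq_abs, abs_of_pos hr, div_eq_inv_mul]
  set h : E → ℝ := (Metric.closedBall (0:E) 1).indicator (fun z => Real.exp (r ^ 2 * φ ‖z‖)) with hh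
  have hkey : ∀ x : E, A.indicator πt x = h (r⁻¹ • (x - ω)) := by
    intro x
    by_cases hx : x ∈ A
    · have hx' : ‖x - ω‖ ≤ r := (hmemA x).1 hx
      have h1 : r⁻¹ • (x - ω) ∈ Metric.closedBall (0:E) 1 := by
        simp only [Metric.mem_closedBall, dist_zero_right]
        rw [hnorm_inv]
        exact (div_le_one hr).2 hx'
      have hxB : ‖x‖ ≤ R := (hmemB x).1 (hAB hx)
      rw [indicator_of_mem hx, hh, indicator_of_mem h1, hπt]
      simp only
      rw [hnorm_inv, max_eq_right (by linarith)]
      norm_num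
    · have hx' : ¬ ‖x - ω‖ ≤ r := fun h' => hx ((hmemA x).2 h')
      have h1 : r⁻¹ • (x - ω) ∉ Metric.closedBall (0:E) 1 := by
        simp only [Metric.mem_closedBall, dist_zero_right]
        rw [hnorm_inv]
        intro hc
        exact hx' ((div_le_one hr).1 hc)
      rw [indicator_of_notMem hx, hh, indicator_of_notMem h1]
  have hintA : ∫ x in A, πt x = r ^ d * Ir := by
    calc ∫ x in A, πt x = ∫ x, A.indicator πt x := (integral_indicator (measurableSet_closedBall)).symm
    _ = ∫ x, h (r⁻¹ • (x - ω)) := by simp_rw [hkey]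
    _ = ∫ x, h (r⁻¹ • x) := integral_sub_right_eq_self (fun y => h (r⁻¹ • y)) ω
    _ = r ^ Module.finrank ℝ E • ∫ x, h x := Measure.integral_comp_inv_smul_of_nonneg volume h hr.le
    _ = r ^ d * Ir := by
        rw [hfr, smul_eq_mul, hh, integral_indicator measurableSet_closedBall, hIr]
  -- Step B : ∫ over B \ A equals Vd*R^d - Vd*r^d
  have h1onBdiff : ∀ x ∈ B \ A, πt x = 1 := by
    rintro x ⟨hxB, hxA⟩
    have hxB' : ‖x‖ ≤ R := (hmemB x).1 hxB
    have hxA' : r < ‖x - ω‖ := lt_of_not_ge (fun h' => hxA ((hmemA x).2 h'))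
    rw [hπt]
    simp only
    rw [hsupp _ ((one_lt_div hr).2 hxA'), max_eq_right (by linarith)]
    norm_num
  have hmeasA : volume A = ENNReal.ofReal (r ^ d) * volume (Metric.closedBall (0:E) 1) := by
    rw [hA, Measure.addHaar_closedBall' volume ω hr.le, hfr]
  have hmeasB : volume B = ENNReal.ofReal (R ^ d) * volume (Metric.closedBall (0:E) 1) := by
    rw [hB, Measure.addHaar_closedBall' volume (0:E) hR0, hfr]
  have hfinA : volume A ≠ ⊤ := (isCompact_closedBall _ _).measure_ne_top
  have hfinB : volume B ≠ ⊤ := (isCompact_closedBall _ _).measure_ne_top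
  have hvolA : (volume A).toReal = Vd * r ^ d := by
    rw [hmeasA, ENNReal.toReal_mul, ENNReal.toReal_ofReal (pow_nonneg hr.le d), ← hVd]; ring
  have hvolB : (volume B).toReal = Vd * R ^ d := by
    rw [hmeasB, ENNReal.toReal_mul, ENNReal.toReal_ofReal (pow_nonneg hR0 d), ← hVd]; ring
  have hintBdiff : ∫ x in B \ A, πt x = Vd * R ^ d - Vd * r ^ d := by
    rw [setIntegral_congr_fun (measurableSet_closedBall.diff measurableSet_closedBall)
      h1onBdiff]
    rw [setIntegral_const, smul_eq_mul, mul_one, measureReal_def,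
      measure_diff hAB measurableSet_closedBall.nullMeasurableSet hfinA,
      ENNReal.toReal_sub_of_le (measure_mono hAB) hfinB, hvolA, hvolB]
  -- Step C : decompose the total integral
  have hsplit : ∫ x, πt x = (∫ x in A, πt x) + (∫ x in B \ A, πt x) + ∫ x in Bᶜ, πt x := by
    have h1 : (∫ x in B, πt x) + ∫ x in Bᶜ, πt x = ∫ x, πt x :=
      integral_add_compl measurableSet_closedBall hint
    have h2 : ∫ x in B \ A, πt x = (∫ x in B, πt x) - ∫ x in A, πt x :=
      integral_diff measurableSet_closedBall hint.integrableOn hAB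
    rw [h2]; linarith
  rw [hsplit, hintA, hintBdiff]
  have hbal' : (Ir + Vd) * r ^ d =
      (∫ x in Bᶜ, πt x) + Vd * R ^ d := hbal
  linarith
end

section
/- Let π̃₀(x) = exp(-(1/2)((‖x‖-R)₊)²) on ℝᵈ with d ≥ 1 and R > 0. Then √(π/2)·V_d·d·R^{d-1} ≤ ∫_{ℝᵈ∖B_R} π̃₀(x) dx ≤ V_d·C₀ᵈ·(d R^{d-1} + d^{(d+1)/2}) for a universal constant C₀ > 2, where V_d is the volume of the unit ball in ℝᵈ. -/
open MeasureTheory Real Set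

private lemma aux_two_pow_bound (d : ℕ) (s R : ℝ) (hs : 0 ≤ s) (hR : 0 ≤ R) :
    (s + R) ^ (d - 1) ≤ 2 ^ (d - 1) * (s ^ (d - 1) + R ^ (d - 1)) := by
  calc (s + R) ^ (d-1) ≤ (2 * max s R) ^ (d-1) := by
        apply pow_le_pow_left₀ (by positivity)
        rcases le_total s R with h | h
        · calc s + R ≤ R + R := by linarith
            _ = 2 * R := by ring
            _ ≤ 2 * max s R := by linarith [le_max_right s R]
        · calc s + R ≤ s + s := by linarith
            _ = 2 * s := by ring
            _ ≤ 2 * max s R := by linarith [le_max_left s R]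
    _ = 2^(d-1) * (max s R)^(d-1) := mul_pow 2 _ _
    _ ≤ 2^(d-1) * (s^(d-1) + R^(d-1)) := by
        apply mul_le_mul_of_nonneg_left _ (by positivity)
        rcases max_cases s R with ⟨h, _⟩ | ⟨h, _⟩ <;> rw [h] <;>
          nlinarith [pow_nonneg hs (d-1), pow_nonneg hR (d-1)]

private lemma aux_pointwise (d : ℕ) (hd : 1 ≤ d) (s : ℝ) (hs : 0 ≤ s) :
    s ^ (d - 1) ≤ (4 * d : ℝ) ^ (((d : ℝ) + 1) / 2) * Real.exp (s ^ 2 / 4) := by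
  have hd1 : (1:ℝ) ≤ d := by exact_mod_cast hd
  have hbase : (1:ℝ) ≤ 4 * d := by nlinarith
  have hexp0 : (0:ℝ) ≤ ((d : ℝ) + 1) / 2 := by positivity
  have hone : (1:ℝ) ≤ (4 * d : ℝ) ^ (((d : ℝ) + 1) / 2) := Real.one_le_rpow hbase hexp0
  rcases le_total s 1 with h1 | h1
  · calc s ^ (d - 1) ≤ 1 := pow_le_one₀ hs h1
      _ ≤ (4 * d : ℝ) ^ (((d : ℝ) + 1) / 2) * Real.exp (s ^ 2 / 4) := by
        nlinarith [Real.one_le_exp (by positivity : (0:ℝ) ≤ s^2/4)]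
  · set n := (d + 1) / 2 with hn
    have h2n : d - 1 ≤ 2 * n := by omega
    have hnd : n ≤ d := by omega
    have hncast : (n : ℝ) ≤ ((d : ℝ) + 1) / 2 := by
      rw [le_div_iff₀ (by norm_num : (0:ℝ) < 2)]
      have h : 2 * n ≤ d + 1 := by omega
      have h2 : ((2*n:ℕ):ℝ) ≤ ((d+1:ℕ):ℝ) := by exact_mod_cast h
      push_cast at h2
      linarith
    have key : s ^ (2 * n) ≤ (4 * n : ℝ) ^ n * Real.exp (s ^ 2 / 4) := by
      have hfe : (s^2/4) ^ n / (n.factorial : ℝ) ≤ Real.exp (s^2/4) :=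
        Real.pow_div_factorial_le_exp _ (by positivity) n
      have hfact : ((n.factorial : ℝ)) ≤ (n:ℝ) ^ n := by exact_mod_cast Nat.factorial_le_pow n
      have hfpos : (0:ℝ) < n.factorial := by exact_mod_cast n.factorial_pos
      have : (s^2/4) ^ n ≤ (n.factorial : ℝ) * Real.exp (s^2/4) := by
        rw [div_le_iff₀ hfpos] at hfe; linarith [hfe]
      calc s ^ (2 * n) = (s^2/4) ^ n * 4 ^ n := by
            rw [div_pow, pow_mul]; field_simp
        _ ≤ ((n.factorial : ℝ) * Real.exp (s^2/4)) * 4 ^ n := by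
            apply mul_le_mul_of_nonneg_right this (by positivity)
        _ ≤ ((n:ℝ)^n * Real.exp (s^2/4)) * 4 ^ n := by
            apply mul_le_mul_of_nonneg_right _ (by positivity)
            exact mul_le_mul_of_nonneg_right hfact (Real.exp_pos _).le
        _ = (4 * n : ℝ) ^ n * Real.exp (s ^ 2 / 4) := by
            rw [mul_pow]; ring
    calc s ^ (d - 1) ≤ s ^ (2 * n) := pow_le_pow_right₀ h1 h2n
      _ ≤ (4 * n : ℝ) ^ n * Real.exp (s ^ 2 / 4) := key
      _ ≤ (4 * d : ℝ) ^ (((d : ℝ) + 1) / 2) * Real.exp (s ^ 2 / 4) := by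
        apply mul_le_mul_of_nonneg_right _ (Real.exp_pos _).le
        calc (4 * n : ℝ) ^ n ≤ (4 * d : ℝ) ^ n := by
              apply pow_le_pow_left₀ (by positivity)
              have : (n:ℝ) ≤ d := by exact_mod_cast hnd
              linarith
          _ = (4 * d : ℝ) ^ (n : ℝ) := (Real.rpow_natCast _ n).symm
          _ ≤ (4 * d : ℝ) ^ (((d : ℝ) + 1) / 2) :=
              Real.rpow_le_rpow_of_exponent_le hbase hncast

private lemma aux_gauss_half : ∫ s in Ioi (0:ℝ), Real.exp (-(1/2) * s^2) = Real.sqrt (π / 2) := by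
  rw [integral_gaussian_Ioi (1/2)]
  rw [show π / (1/2) = 4 * (π/2) by ring, Real.sqrt_mul (by norm_num) (π/2),
    show (4:ℝ) = 2^2 by norm_num, Real.sqrt_sq (by norm_num : (0:ℝ) ≤ 2)]
  ring

private lemma aux_gauss_quarter : ∫ s in Ioi (0:ℝ), Real.exp (-(1/4) * s^2) = Real.sqrt π := by
  rw [integral_gaussian_Ioi (1/4)]
  rw [show π / (1/4) = 2^2 * π by ring, Real.sqrt_mul (by positivity) π,
    Real.sqrt_sq (by norm_num : (0:ℝ) ≤ 2)]
  ring

private lemma aux_int_pow (d : ℕ) :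
    IntegrableOn (fun s : ℝ => s ^ (d-1) * Real.exp (-(1/2) * s^2)) (Ioi 0) := by
  have := integrableOn_rpow_mul_exp_neg_mul_sq (by norm_num : (0:ℝ) < 1/2)
    (s := ((d-1 : ℕ) : ℝ)) (lt_of_lt_of_le (by norm_num) (Nat.cast_nonneg _))
  refine this.congr_fun (fun x hx => ?_) measurableSet_Ioi
  simp only [Real.rpow_natCast]

private lemma aux_int_shift (d : ℕ) (R : ℝ) (hR : 0 < R) :
    IntegrableOn (fun s : ℝ => (s + R) ^ (d-1) * Real.exp (-(1/2) * s^2)) (Ioi 0) := by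
  have i2 := aux_int_pow d
  have i1 : IntegrableOn (fun s : ℝ => Real.exp (-(1/2) * s^2)) (Ioi 0) :=
    (integrable_exp_neg_mul_sq (by norm_num : (0:ℝ) < 1/2)).integrableOn
  have idom : IntegrableOn
      (fun s : ℝ => 2^(d-1) * (s ^ (d-1) * Real.exp (-(1/2) * s^2)) +
        (2^(d-1) * R^(d-1)) * Real.exp (-(1/2) * s^2)) (Ioi 0) :=
    (i2.const_mul _).add (i1.const_mul _)
  refine idom.mono' ?_ ?_
  · exact (Continuous.aestronglyMeasurable (by fun_prop)).restrict
  · filter_upwards [ae_restrict_mem measurableSet_Ioi] with s hs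
    have hs0 : (0:ℝ) < s := hs
    rw [Real.norm_eq_abs, abs_of_nonneg (by positivity)]
    calc (s + R) ^ (d-1) * Real.exp (-(1/2) * s^2)
        ≤ (2^(d-1) * (s^(d-1) + R^(d-1))) * Real.exp (-(1/2) * s^2) :=
          mul_le_mul_of_nonneg_right (aux_two_pow_bound d s R hs0.le hR.le)
            (Real.exp_pos _).le
      _ = 2^(d-1) * (s ^ (d-1) * Real.exp (-(1/2) * s^2)) +
          (2^(d-1) * R^(d-1)) * Real.exp (-(1/2) * s^2) := by ring

private lemma aux_intB (d : ℕ) (hd : 1 ≤ d) :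
    ∫ s in Ioi (0:ℝ), s ^ (d-1) * Real.exp (-(1/2) * s^2) ≤
      (4 * d : ℝ) ^ (((d : ℝ) + 1) / 2) * Real.sqrt π := by
  have i1 : IntegrableOn (fun s : ℝ => Real.exp (-(1/4) * s^2)) (Ioi 0) :=
    (integrable_exp_neg_mul_sq (by norm_num : (0:ℝ) < 1/4)).integrableOn
  have step : ∫ s in Ioi (0:ℝ), s ^ (d-1) * Real.exp (-(1/2) * s^2) ≤
      ∫ s in Ioi (0:ℝ), (4 * d : ℝ) ^ (((d : ℝ) + 1) / 2) * Real.exp (-(1/4) * s^2) := by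
    apply setIntegral_mono_on (aux_int_pow d) (i1.const_mul _) measurableSet_Ioi
    intro s hs
    have hs0 : (0:ℝ) < s := hs
    have h := aux_pointwise d hd s hs0.le
    calc s ^ (d-1) * Real.exp (-(1/2) * s^2)
        ≤ ((4 * d : ℝ) ^ (((d : ℝ) + 1) / 2) * Real.exp (s^2/4)) * Real.exp (-(1/2) * s^2) :=
          mul_le_mul_of_nonneg_right h (Real.exp_pos _).le
      _ = (4 * d : ℝ) ^ (((d : ℝ) + 1) / 2) * Real.exp (-(1/4) * s^2) := by
          rw [mul_assoc, ← Real.exp_add]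
          congr 2
          ring
  rw [integral_const_mul, aux_gauss_quarter] at step
  exact step

theorem stmt10 :
    ∃ C₀ : ℝ, 2 < C₀ ∧
      ∀ (d : ℕ), 1 ≤ d → ∀ R : ℝ, 0 < R →
        Real.sqrt (π / 2) *
            (volume (Metric.closedBall (0 : EuclideanSpace ℝ (Fin d)) 1)).toReal *
            d * R ^ (d - 1) ≤
          (∫ x in (Metric.closedBall (0 : EuclideanSpace ℝ (Fin d)) R)ᶜ,
            Real.exp (-(1 / 2) * (max (‖x‖ - R) 0) ^ 2)) ∧
        (∫ x in (Metric.closedBall (0 : EuclideanSpace ℝ (Fin d)) R)ᶜ,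
            Real.exp (-(1 / 2) * (max (‖x‖ - R) 0) ^ 2)) ≤
          (volume (Metric.closedBall (0 : EuclideanSpace ℝ (Fin d)) 1)).toReal *
            C₀ ^ d * (d * R ^ (d - 1) + (d : ℝ) ^ (((d : ℝ) + 1) / 2)) := by
  refine ⟨16, by norm_num, ?_⟩
  intro d hd R hR
  haveI : Nonempty (Fin d) := ⟨⟨0, hd⟩⟩
  haveI : Nontrivial (EuclideanSpace ℝ (Fin d)) := by infer_instance
  set V : ℝ := (volume (Metric.closedBall (0 : EuclideanSpace ℝ (Fin d)) 1)).toReal with hV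
  have hVball : (volume (Metric.ball (0 : EuclideanSpace ℝ (Fin d)) 1)).toReal = V := by
    rw [hV, Measure.addHaar_closedBall_eq_addHaar_ball]
  have hV0 : 0 ≤ V := ENNReal.toReal_nonneg
  set J : ℝ := ∫ s in Ioi (0:ℝ), (s + R) ^ (d - 1) * Real.exp (-(1/2) * s^2) with hJ
  -- Step 1+2+3: the integral equals d * V * J
  have hmain : (∫ x in (Metric.closedBall (0 : EuclideanSpace ℝ (Fin d)) R)ᶜ,
      Real.exp (-(1 / 2) * (max (‖x‖ - R) 0) ^ 2)) = d * V * J := by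
    set f : ℝ → ℝ := fun r => if R < r then Real.exp (-(1/2) * (r - R)^2) else 0 with hf
    have h1 : (∫ x in (Metric.closedBall (0 : EuclideanSpace ℝ (Fin d)) R)ᶜ,
        Real.exp (-(1 / 2) * (max (‖x‖ - R) 0) ^ 2)) = ∫ x : EuclideanSpace ℝ (Fin d), f ‖x‖ := by
      rw [← integral_indicator measurableSet_closedBall.compl]
      congr 1
      funext x
      by_cases hx : R < ‖x‖
      · rw [Set.indicator_of_mem, hf]
        · simp only [hx, if_true]
          rw [max_eq_left (by linarith)]
        · simp [Metric.mem_closedBall, dist_zero_right, not_le, hx]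
      · rw [Set.indicator_of_notMem, hf]
        · simp [hx]
        · simp only [mem_compl_iff, Metric.mem_closedBall, dist_zero_right, not_not]
          exact not_lt.mp hx
    have h2 : (∫ y in Ioi (0:ℝ), y ^ (d - 1) * f y) = J := by
      set h : ℝ → ℝ := fun y => y ^ (d - 1) * Real.exp (-(1/2) * (y - R)^2) with hh
      have e1 : (fun y => y ^ (d - 1) * f y) = (Ioi R).indicator h := by
        funext y
        by_cases hy : R < y
        · simp [h, f, indicator_of_mem, hy]
        · simp [h, f, indicator_of_notMem, hy]
      have e3 : ∀ s : ℝ, h (s + R) = (s + R) ^ (d - 1) * Real.exp (-(1/2) * s^2) := by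
        intro s; simp only [h, add_sub_cancel_right]
      calc (∫ y in Ioi (0:ℝ), y ^ (d - 1) * f y)
          = ∫ y in Ioi (0:ℝ), (Ioi R).indicator h y := by rw [e1]
        _ = ∫ y, (Ioi R).indicator h y := by
            rw [← integral_indicator measurableSet_Ioi, indicator_indicator,
              Ioi_inter_Ioi, max_eq_right hR.le]
        _ = ∫ y, (Ioi R).indicator h (y + R) := (integral_add_right_eq_self _ R).symm
        _ = ∫ y, (Ioi (0:ℝ)).indicator (fun s => h (s + R)) y := by
            congr 1
            funext y
            by_cases hy : 0 < y
            · rw [indicator_of_mem (mem_Ioi.mpr (by linarith)), indicator_of_mem (mem_Ioi.mpr hy)]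
            · rw [indicator_of_notMem (by simp [mem_Ioi]; linarith),
                indicator_of_notMem (by simpa using hy)]
        _ = ∫ y, (Ioi (0:ℝ)).indicator
              (fun s => (s + R) ^ (d - 1) * Real.exp (-(1/2) * s^2)) y := by
            simp_rw [e3]
        _ = J := by rw [hJ, ← integral_indicator measurableSet_Ioi]
    rw [h1, integral_fun_norm_addHaar volume f, finrank_euclideanSpace_fin]
    simp only [nsmul_eq_mul, smul_eq_mul]
    rw [← h2]
    rw [measureReal_def, hVball]
    ring
  have i1 : IntegrableOn (fun s : ℝ => Real.exp (-(1/2) * s^2)) (Ioi 0) :=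
    (integrable_exp_neg_mul_sq (by norm_num : (0:ℝ) < 1/2)).integrableOn
  have i2 := aux_int_pow d
  have i3 := aux_int_shift d R hR
  constructor
  · -- lower bound
    have hJlow : R ^ (d-1) * Real.sqrt (π / 2) ≤ J := by
      have : (∫ s in Ioi (0:ℝ), R ^ (d-1) * Real.exp (-(1/2) * s^2)) ≤ J := by
        apply setIntegral_mono_on (i1.const_mul _) i3 measurableSet_Ioi
        intro s hs
        have hs0 : (0:ℝ) < s := hs
        exact mul_le_mul_of_nonneg_right
          (pow_le_pow_left₀ hR.le (by linarith) _) (Real.exp_pos _).le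
      rwa [integral_const_mul, aux_gauss_half] at this
    rw [hmain]
    calc Real.sqrt (π / 2) * V * d * R ^ (d - 1)
        = (d : ℝ) * V * (R ^ (d-1) * Real.sqrt (π / 2)) := by ring
      _ ≤ d * V * J := by
          apply mul_le_mul_of_nonneg_left hJlow (by positivity)
  · -- upper bound
    set E : ℝ := ((d : ℝ) + 1) / 2 with hE
    have hJup : J ≤ 2^(d-1) * ((4 * d : ℝ) ^ E * Real.sqrt π) +
        (2^(d-1) * R^(d-1)) * Real.sqrt (π / 2) := by
      have step : J ≤ ∫ s in Ioi (0:ℝ),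
          (2^(d-1) * (s ^ (d-1) * Real.exp (-(1/2) * s^2)) +
            (2^(d-1) * R^(d-1)) * Real.exp (-(1/2) * s^2)) := by
        apply setIntegral_mono_on i3 ((i2.const_mul _).add (i1.const_mul _)) measurableSet_Ioi
        intro s hs
        have hs0 : (0:ℝ) < s := hs
        calc (s + R) ^ (d-1) * Real.exp (-(1/2) * s^2)
            ≤ (2^(d-1) * (s^(d-1) + R^(d-1))) * Real.exp (-(1/2) * s^2) :=
              mul_le_mul_of_nonneg_right (aux_two_pow_bound d s R hs0.le hR.le)
                (Real.exp_pos _).le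
          _ = 2^(d-1) * (s ^ (d-1) * Real.exp (-(1/2) * s^2)) +
              (2^(d-1) * R^(d-1)) * Real.exp (-(1/2) * s^2) := by ring
      rw [integral_add (i2.const_mul _) (i1.const_mul _), integral_const_mul,
        integral_const_mul, aux_gauss_half] at step
      refine step.trans ?_
      apply add_le_add_left
      exact mul_le_mul_of_nonneg_left (aux_intB d hd) (by positivity)
    rw [hmain]
    -- final arithmetic
    have h4sqrt : Real.sqrt 4 = 2 := by
      rw [show (4:ℝ) = 2^2 by norm_num, Real.sqrt_sq (by norm_num : (0:ℝ) ≤ 2)]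
    have hsqrt2 : Real.sqrt (π / 2) ≤ 2 :=
      le_trans (Real.sqrt_le_sqrt (by linarith [Real.pi_le_four])) (le_of_eq h4sqrt)
    have hsqrtpi : Real.sqrt π ≤ 2 :=
      le_trans (Real.sqrt_le_sqrt Real.pi_le_four) (le_of_eq h4sqrt)
    have hd1 : (1:ℝ) ≤ d := by exact_mod_cast hd
    have h4E : (4 * d : ℝ) ^ E = 2^(d+1) * (d:ℝ) ^ E := by
      rw [Real.mul_rpow (by norm_num) (Nat.cast_nonneg d)]
      congr 1
      rw [show (4:ℝ) = (2:ℝ)^(2:ℝ) by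
        rw [show ((2:ℝ):ℝ) = ((2:ℕ):ℝ) by norm_num, Real.rpow_natCast]; norm_num]
      rw [← Real.rpow_mul (by norm_num : (0:ℝ) ≤ 2)]
      rw [show (2:ℝ) * E = ((d+1 : ℕ) : ℝ) by rw [hE]; push_cast; ring]
      rw [Real.rpow_natCast]
    have hdE0 : (0:ℝ) ≤ (d:ℝ) ^ E := Real.rpow_nonneg (Nat.cast_nonneg d) E
    -- (a): d * 2^(d-1) * (4d)^E * √π ≤ 16^d * d^E
    have hdle : (d:ℝ) ≤ 2^d := by
      exact_mod_cast (Nat.lt_two_pow_self (n := d)).le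
    have hpow2 : (2:ℝ)^(d-1) * 2^(d+1) = 4^d := by
      rw [← pow_add, show d - 1 + (d+1) = 2*d by omega, pow_mul]
      norm_num
    have h16 : (16:ℝ)^d = 4^d * 4^d := by
      rw [← mul_pow]; norm_num
    have hdsqrtpi : (d:ℝ) * Real.sqrt π ≤ 4^d := by
      have h1 : (d:ℝ) * Real.sqrt π ≤ 2^d * 2 := by
        have : (0:ℝ) ≤ Real.sqrt π := Real.sqrt_nonneg _
        nlinarith [Real.sqrt_nonneg π]
      have h2 : (2:ℝ)^d * 2 ≤ 4^d := by
        rw [show (2:ℝ)^d * 2 = 2^(d+1) by ring, show (4:ℝ)^d = 2^(2*d) by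
          rw [pow_mul]; norm_num]
        exact pow_le_pow_right₀ (by norm_num) (by omega)
      linarith
    have ha : (d:ℝ) * (2^(d-1) * ((4 * d : ℝ) ^ E * Real.sqrt π)) ≤ 16^d * (d:ℝ)^E := by
      rw [h4E, h16]
      calc (d:ℝ) * (2^(d-1) * (2^(d+1) * (d:ℝ)^E * Real.sqrt π))
          = ((d:ℝ) * Real.sqrt π) * (2^(d-1) * 2^(d+1)) * (d:ℝ)^E := by ring
        _ = ((d:ℝ) * Real.sqrt π) * 4^d * (d:ℝ)^E := by rw [hpow2]
        _ ≤ 4^d * 4^d * (d:ℝ)^E := by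
            apply mul_le_mul_of_nonneg_right _ hdE0
            exact mul_le_mul_of_nonneg_right hdsqrtpi (by positivity)
    have hb : (d:ℝ) * ((2^(d-1) * R^(d-1)) * Real.sqrt (π / 2)) ≤
        16^d * ((d:ℝ) * R^(d-1)) := by
      have hc : (2:ℝ)^(d-1) * Real.sqrt (π / 2) ≤ 16^d := by
        have h1 : (2:ℝ)^(d-1) * Real.sqrt (π / 2) ≤ 2^(d-1) * 2 := by
          apply mul_le_mul_of_nonneg_left hsqrt2 (by positivity)
        have h2 : (2:ℝ)^(d-1) * 2 ≤ 16^d := by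
          rw [show (2:ℝ)^(d-1) * 2 = 2^(d-1+1) by ring]
          calc (2:ℝ)^(d-1+1) ≤ 2^(4*d) := pow_le_pow_right₀ (by norm_num) (by omega)
            _ = 16^d := by rw [pow_mul]; norm_num
        linarith
      calc (d:ℝ) * ((2^(d-1) * R^(d-1)) * Real.sqrt (π / 2))
          = (2^(d-1) * Real.sqrt (π / 2)) * ((d:ℝ) * R^(d-1)) := by ring
        _ ≤ 16^d * ((d:ℝ) * R^(d-1)) := by
            apply mul_le_mul_of_nonneg_right hc (by positivity)
    calc (d:ℝ) * V * J
        ≤ (d:ℝ) * V * (2^(d-1) * ((4 * d : ℝ) ^ E * Real.sqrt π) +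
            (2^(d-1) * R^(d-1)) * Real.sqrt (π / 2)) := by
          apply mul_le_mul_of_nonneg_left hJup (by positivity)
      _ = V * ((d:ℝ) * (2^(d-1) * ((4 * d : ℝ) ^ E * Real.sqrt π)) +
            (d:ℝ) * ((2^(d-1) * R^(d-1)) * Real.sqrt (π / 2))) := by ring
      _ ≤ V * (16^d * (d:ℝ)^E + 16^d * ((d:ℝ) * R^(d-1))) := by
          apply mul_le_mul_of_nonneg_left _ hV0
          exact add_le_add ha hb
      _ = V * 16 ^ d * ((d:ℝ) * R ^ (d - 1) + (d : ℝ) ^ E) := by ring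
end

section
/- Let I_r = ∫_{B₁} exp(r²φ(‖x‖)) dx in ℝᵈ, where φ is a decreasing bump function with φ(x) = φ(0) - x²/2 on [0,α] for some α > 0 and 0 ≤ φ ≤ φ(0). There exists a constant c_r > 0 (depending only on α and φ) such that for all r ≥ c_r√d, 1/2 ≤ rᵈ I_r / ((2π)^{d/2} exp(r²φ(0))) ≤ 2. -/
open MeasureTheory Real Set

set_option maxHeartbeats 1000000 in
theorem stmt11 (φ : ℝ → ℝ) (α : ℝ) (hα : 0 < α) (hα1 : α ≤ 1)
    (hcont : ContinuousOn φ (Ici 0))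
    (hnn : ∀ x ≥ (0 : ℝ), 0 ≤ φ x)
    (hub : ∀ x ≥ (0 : ℝ), φ x ≤ φ 0)
    (hdec : AntitoneOn φ (Ici 0))
    (hsupp : ∀ x > (1 : ℝ), φ x = 0)
    (hquad : ∀ x ∈ Icc 0 α, φ x = φ 0 - x ^ 2 / 2) :
    ∃ cr : ℝ, 0 < cr ∧
      ∀ (d : ℕ), 1 ≤ d → ∀ r : ℝ, cr * Real.sqrt d ≤ r →
        1 / 2 ≤ r ^ d *
            (∫ x in Metric.closedBall (0 : EuclideanSpace ℝ (Fin d)) 1,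
              Real.exp (r ^ 2 * φ ‖x‖)) /
            ((2 * π) ^ ((d : ℝ) / 2) * Real.exp (r ^ 2 * φ 0)) ∧
        r ^ d *
            (∫ x in Metric.closedBall (0 : EuclideanSpace ℝ (Fin d)) 1,
              Real.exp (r ^ 2 * φ ‖x‖)) /
            ((2 * π) ^ ((d : ℝ) / 2) * Real.exp (r ^ 2 * φ 0)) ≤ 2 := by
  obtain ⟨β, hβdef⟩ : ∃ b : ℝ, b = Real.log (Real.sqrt 2 / α) + 2 := ⟨_, rfl⟩
  have hlogs : Real.log (Real.sqrt 2) = (1/2) * Real.log 2 := by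
    rw [Real.log_sqrt (by norm_num)]; ring
  have hloglb : (1/2) * Real.log 2 ≤ Real.log (Real.sqrt 2 / α) := by
    rw [← hlogs]
    apply Real.log_le_log (Real.sqrt_pos.mpr (by norm_num))
    rw [le_div_iff₀ hα]
    nlinarith [Real.sqrt_pos.mpr (show (0:ℝ) < 2 by norm_num)]
  have hlog2 : (0:ℝ) ≤ Real.log 2 := Real.log_nonneg (by norm_num)
  have hβpos : 0 < β := by
    have : (0:ℝ) ≤ Real.log (Real.sqrt 2 / α) := by nlinarith
    simp only [hβdef]; linarith
  refine ⟨2/α * Real.sqrt β, mul_pos (by positivity) (Real.sqrt_pos.mpr hβpos), ?_⟩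
  intro d hd r hr
  have hd1 : (1:ℝ) ≤ (d:ℝ) := by exact_mod_cast hd
  have hr0 : 0 < r := by
    have h1 : (0:ℝ) < Real.sqrt d := Real.sqrt_pos.mpr (by linarith)
    have : (0:ℝ) < 2/α * Real.sqrt β * Real.sqrt d :=
      mul_pos (mul_pos (by positivity) (Real.sqrt_pos.mpr hβpos)) h1
    linarith
  -- key inequality  d * β ≤ r² α² / 4
  have hrr : (d:ℝ) * β ≤ r^2 * α^2 / 4 := by
    have hnn' : (0:ℝ) ≤ 2/α * Real.sqrt β * Real.sqrt d := by positivity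
    have h2 := pow_le_pow_left₀ hnn' hr 2
    have h3 : (2/α * Real.sqrt β * Real.sqrt d)^2 = 4/α^2 * β * d := by
      rw [mul_pow, mul_pow, Real.sq_sqrt hβpos.le, Real.sq_sqrt (by positivity : (0:ℝ) ≤ (d:ℝ))]
      ring
    rw [h3] at h2
    have h4 := mul_le_mul_of_nonneg_right h2 (show (0:ℝ) ≤ α^2/4 by positivity)
    have h5 : 4/α^2 * β * (d:ℝ) * (α^2/4) = (d:ℝ) * β := by field_simp
    rw [h5] at h4
    nlinarith [h4]
  set B1 : Set (EuclideanSpace ℝ (Fin d)) :=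
    Metric.closedBall (0 : EuclideanSpace ℝ (Fin d)) 1 with hB1def
  set A : Set (EuclideanSpace ℝ (Fin d)) :=
    Metric.closedBall (0 : EuclideanSpace ℝ (Fin d)) α with hAdef
  have hAsub : A ⊆ B1 := Metric.closedBall_subset_closedBall hα1
  have hAmeas : MeasurableSet A := measurableSet_closedBall
  -- the integrand
  set f : EuclideanSpace ℝ (Fin d) → ℝ := fun x => Real.exp (r ^ 2 * φ ‖x‖) with hfdef
  have hφc : Continuous fun x : EuclideanSpace ℝ (Fin d) => φ ‖x‖ := by
    rw [← continuousOn_univ]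
    exact hcont.comp continuous_norm.continuousOn (fun x _ => norm_nonneg x)
  have hfc : Continuous f := Real.continuous_exp.comp (continuous_const.mul hφc)
  have hfInt : IntegrableOn f B1 :=
    hfc.locallyIntegrable.integrableOn_isCompact (isCompact_closedBall _ _)
  have hfnn : ∀ x, 0 ≤ f x := fun x => (Real.exp_pos _).le
  -- Gaussian integrals
  have gaussInt : ∀ b : ℝ, 0 < b → Integrable (fun x : EuclideanSpace ℝ (Fin d) => Real.exp (-b * ‖x‖^2)) := by
    intro b hb
    have h := (GaussianFourier.integrable_cexp_neg_mul_sq_norm_add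
      (V := EuclideanSpace ℝ (Fin d)) (b := (b:ℂ)) (by simpa using hb) 0 0).norm
    refine h.congr (Filter.Eventually.of_forall fun x => ?_)
    simp [Complex.norm_exp]
    norm_cast
    exact Or.inl rfl
  have gauss : ∀ b : ℝ, 0 < b →
      (∫ x : EuclideanSpace ℝ (Fin d), Real.exp (-b * ‖x‖^2)) = (π/b) ^ ((d:ℝ)/2) := by
    intro b hb
    rw [GaussianFourier.integral_rexp_neg_mul_sq_norm hb]
    rw [finrank_euclideanSpace_fin]
  -- rpow computation
  have hrd : (0:ℝ) < r ^ d := by positivity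
  have keyrpow : ∀ c : ℝ, 0 < c →
      (π/(c*r^2)) ^ ((d:ℝ)/2) = (π/c) ^ ((d:ℝ)/2) / r^d := by
    intro c hc
    have h1 : π/(c*r^2) = (π/c) / r^2 := by rw [div_div]
    rw [h1, Real.div_rpow (by positivity) (by positivity)]
    congr 1
    rw [← Real.rpow_natCast r 2, ← Real.rpow_mul hr0.le,
      show ((2:ℕ):ℝ) * ((d:ℝ)/2) = (d:ℝ) by push_cast; ring, Real.rpow_natCast]
  obtain ⟨P, hPdef⟩ : ∃ p : ℝ, p = (2*π) ^ ((d:ℝ)/2) := ⟨_, rfl⟩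
  have hPpos : 0 < P := hPdef ▸ Real.rpow_pos_of_pos (by positivity) _
  obtain ⟨Ee, hEedef⟩ : ∃ e : ℝ, e = Real.exp (r^2 * φ 0) := ⟨_, rfl⟩
  have hEpos : 0 < Ee := hEedef ▸ Real.exp_pos _
  obtain ⟨u, hudef⟩ : ∃ v : ℝ, v = r^2 * α^2 / 4 := ⟨_, rfl⟩
  rw [← hudef] at hrr
  -- Gaussian with b = (1/2) r²
  have g1 : (∫ x : EuclideanSpace ℝ (Fin d), Real.exp (-((1/2)*r^2) * ‖x‖^2)) = P / r^d := by
    rw [gauss _ (by positivity), keyrpow _ (by norm_num),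
      show π/(1/2:ℝ) = 2*π by ring, hPdef]
  have g2 : (∫ x : EuclideanSpace ℝ (Fin d), Real.exp (-((1/4)*r^2) * ‖x‖^2))
      = (2:ℝ) ^ ((d:ℝ)/2) * (P / r^d) := by
    rw [gauss _ (by positivity), keyrpow _ (by norm_num)]
    rw [show π/(1/4 : ℝ) = 2 * (2*π) by ring,
      Real.mul_rpow (by norm_num) (by positivity), hPdef]
    ring
  have g3 : (∫ x : EuclideanSpace ℝ (Fin d), Real.exp (-((α^2/4)*r^2) * ‖x‖^2))
      = (2/α^2) ^ ((d:ℝ)/2) * (P / r^d) := by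
    rw [gauss _ (by positivity), keyrpow _ (by positivity)]
    rw [show π/(α^2/4 : ℝ) = (2/α^2) * (2*π) by field_simp; ring,
      Real.mul_rpow (by positivity) (by positivity), hPdef]
    ring
  -- small quantities
  have hsmall1 : Real.exp (-u) * (2:ℝ) ^ ((d:ℝ)/2) ≤ 1/2 := by
    rw [Real.rpow_def_of_pos (by norm_num), ← Real.exp_add]
    have hexple : -u + Real.log 2 * ((d:ℝ)/2) ≤ -2 := by
      have hb : (1/2) * Real.log 2 + 2 ≤ β := by simp only [hβdef]; linarith
      have hmul := mul_le_mul_of_nonneg_left hb (show (0:ℝ) ≤ (d:ℝ) by linarith)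
      linarith [hrr, hd1, hmul]
    have h2 : Real.exp (-u + Real.log 2 * ((d:ℝ)/2)) ≤ Real.exp (-2) :=
      Real.exp_le_exp.mpr hexple
    have h3 : Real.exp (-2 : ℝ) ≤ 1/2 := by
      rw [Real.exp_neg]
      have he2 : (2:ℝ) ≤ Real.exp 2 := by nlinarith [Real.add_one_le_exp (2:ℝ)]
      rw [show (1:ℝ)/2 = 2⁻¹ by norm_num]
      exact inv_anti₀ (by norm_num) he2
    linarith
  have hsmall2 : Real.exp (-u) * (2/α^2 : ℝ) ^ ((d:ℝ)/2) ≤ 1 := by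
    rw [Real.rpow_def_of_pos (by positivity), ← Real.exp_add]
    rw [show (1:ℝ) = Real.exp 0 by simp]
    apply Real.exp_le_exp.mpr
    have hlogeq : Real.log (2/α^2) = 2 * Real.log (Real.sqrt 2 / α) := by
      rw [Real.log_div (by norm_num) (by positivity),
        Real.log_div (by positivity) hα.ne', Real.log_pow, hlogs]
      push_cast; ring
    rw [hlogeq]
    have hb : Real.log (Real.sqrt 2 / α) = β - 2 := by simp only [hβdef]; ring
    rw [hb]
    nlinarith
  -- lower bound for the integral over A
  have quadOnA : ∀ x ∈ A, f x = Ee * Real.exp (-((1/2)*r^2) * ‖x‖^2) := by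
    intro x hx
    have hxle : ‖x‖ ≤ α := by
      simpa [hAdef, Metric.mem_closedBall, dist_zero_right] using hx
    rw [hfdef]
    simp only
    rw [hquad _ ⟨norm_nonneg x, hxle⟩, hEedef, ← Real.exp_add]
    ring_nf
  have hIA : (∫ x in A, f x) = Ee * ∫ x in A, Real.exp (-((1/2)*r^2) * ‖x‖^2) := by
    rw [← integral_const_mul]
    exact setIntegral_congr_fun hAmeas quadOnA
  -- tail bound: ∫_{Aᶜ} gaussian(1/2 r²) ≤ exp(-u) * 2^(d/2) * P / r^d
  have tail : (∫ x in Aᶜ, Real.exp (-((1/2)*r^2) * ‖x‖^2))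
      ≤ Real.exp (-u) * ((2:ℝ) ^ ((d:ℝ)/2) * (P / r^d)) := by
    have step : (∫ x in Aᶜ, Real.exp (-((1/2)*r^2) * ‖x‖^2))
        ≤ ∫ x in Aᶜ, Real.exp (-u) * Real.exp (-((1/4)*r^2) * ‖x‖^2) := by
      apply setIntegral_mono_on ((gaussInt _ (by positivity)).integrableOn)
        (((gaussInt _ (by positivity)).const_mul _).integrableOn) hAmeas.compl
      intro x hx
      have hxgt : α < ‖x‖ := by
        simp only [hAdef, mem_compl_iff, Metric.mem_closedBall, dist_zero_right, not_le] at hx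
        exact hx
      rw [← Real.exp_add]
      apply Real.exp_le_exp.mpr
      have hsq : α^2 ≤ ‖x‖^2 := by nlinarith [norm_nonneg x]
      have hmul := mul_le_mul_of_nonneg_left hsq (show (0:ℝ) ≤ r^2/4 by positivity)
      simp only [hudef]
      nlinarith [hmul]
    calc (∫ x in Aᶜ, Real.exp (-((1/2)*r^2) * ‖x‖^2))
        ≤ ∫ x in Aᶜ, Real.exp (-u) * Real.exp (-((1/4)*r^2) * ‖x‖^2) := step
      _ = Real.exp (-u) * ∫ x in Aᶜ, Real.exp (-((1/4)*r^2) * ‖x‖^2) := integral_const_mul _ _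
      _ ≤ Real.exp (-u) * ∫ x : EuclideanSpace ℝ (Fin d), Real.exp (-((1/4)*r^2) * ‖x‖^2) := by
          apply mul_le_mul_of_nonneg_left _ (Real.exp_pos _).le
          exact setIntegral_le_integral (gaussInt _ (by positivity))
            (Filter.Eventually.of_forall fun x => (Real.exp_pos _).le)
      _ = Real.exp (-u) * ((2:ℝ) ^ ((d:ℝ)/2) * (P / r^d)) := by rw [g2]
  have hsplitA : (∫ x in A, Real.exp (-((1/2)*r^2) * ‖x‖^2))
      = (∫ x : EuclideanSpace ℝ (Fin d), Real.exp (-((1/2)*r^2) * ‖x‖^2))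
        - ∫ x in Aᶜ, Real.exp (-((1/2)*r^2) * ‖x‖^2) := by
    have h := integral_add_compl hAmeas (gaussInt _ (by positivity : (0:ℝ) < (1/2)*r^2))
    linarith
  have hlowA : Ee * (P / r^d - Real.exp (-u) * ((2:ℝ) ^ ((d:ℝ)/2) * (P / r^d)))
      ≤ ∫ x in A, f x := by
    rw [hIA]
    apply mul_le_mul_of_nonneg_left _ hEpos.le
    rw [hsplitA, g1]
    linarith
  have hIlow : Ee * (P / r^d - Real.exp (-u) * ((2:ℝ) ^ ((d:ℝ)/2) * (P / r^d)))
      ≤ ∫ x in B1, f x := by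
    refine le_trans hlowA ?_
    apply setIntegral_mono_set hfInt
      (Filter.Eventually.of_forall fun x => hfnn x) (HasSubset.Subset.eventuallyLE hAsub)
  -- upper bound
  have hIAup : (∫ x in A, f x) ≤ Ee * (P / r^d) := by
    rw [hIA]
    apply mul_le_mul_of_nonneg_left _ hEpos.le
    rw [← g1]
    exact setIntegral_le_integral (gaussInt _ (by positivity))
      (Filter.Eventually.of_forall fun x => (Real.exp_pos _).le)
  have hannulus : (∫ x in B1 \ A, f x)
      ≤ Ee * (Real.exp (-u) * ((2/α^2 : ℝ) ^ ((d:ℝ)/2) * (P / r^d))) := by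
    have step : (∫ x in B1 \ A, f x)
        ≤ ∫ x in B1 \ A, (Ee * Real.exp (-u)) * Real.exp (-((α^2/4)*r^2) * ‖x‖^2) := by
      apply setIntegral_mono_on (hfInt.mono_set diff_subset)
        (((gaussInt _ (by positivity)).const_mul _).integrableOn)
        (measurableSet_closedBall.diff hAmeas)
      intro x hx
      obtain ⟨hxB, hxA⟩ := hx
      have hx1 : ‖x‖ ≤ 1 := by
        simpa [hB1def, Metric.mem_closedBall, dist_zero_right] using hxB
      have hxgt : α ≤ ‖x‖ := by
        simp only [hAdef, Metric.mem_closedBall, dist_zero_right, not_le] at hxA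
        exact hxA.le
      have hφle : φ ‖x‖ ≤ φ α := hdec (mem_Ici.mpr hα.le) (mem_Ici.mpr (norm_nonneg x)) hxgt
      have hφα : φ α = φ 0 - α^2/2 := hquad α ⟨hα.le, le_refl α⟩
      rw [hfdef, hEedef]
      simp only
      rw [mul_assoc, ← Real.exp_add, ← Real.exp_add]
      apply Real.exp_le_exp.mpr
      have hx2 : ‖x‖^2 ≤ 1 := by nlinarith [norm_nonneg x]
      have hsq : (α^2/4)*r^2 * ‖x‖^2 ≤ (α^2/4)*r^2 := by
        have := mul_le_mul_of_nonneg_left hx2 (show (0:ℝ) ≤ (α^2/4)*r^2 by positivity)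
        linarith
      have hmul := mul_le_mul_of_nonneg_left hφle (sq_nonneg r)
      rw [hφα] at hmul
      simp only [hudef]
      nlinarith [hmul, hsq]
    calc (∫ x in B1 \ A, f x)
        ≤ ∫ x in B1 \ A, (Ee * Real.exp (-u)) * Real.exp (-((α^2/4)*r^2) * ‖x‖^2) := step
      _ = (Ee * Real.exp (-u)) * ∫ x in B1 \ A, Real.exp (-((α^2/4)*r^2) * ‖x‖^2) :=
          integral_const_mul _ _
      _ ≤ (Ee * Real.exp (-u)) * ∫ x : EuclideanSpace ℝ (Fin d), Real.exp (-((α^2/4)*r^2) * ‖x‖^2) := by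
          apply mul_le_mul_of_nonneg_left _ (by positivity)
          exact setIntegral_le_integral (gaussInt _ (by positivity))
            (Filter.Eventually.of_forall fun x => (Real.exp_pos _).le)
      _ = Ee * (Real.exp (-u) * ((2/α^2 : ℝ) ^ ((d:ℝ)/2) * (P / r^d))) := by rw [g3]; ring
  have hIup : (∫ x in B1, f x)
      ≤ Ee * (P / r^d) + Ee * (Real.exp (-u) * ((2/α^2 : ℝ) ^ ((d:ℝ)/2) * (P / r^d))) := by
    have hunion : (∫ x in B1, f x) = (∫ x in A, f x) + ∫ x in B1 \ A, f x := by
      rw [← setIntegral_union disjoint_sdiff_right (measurableSet_closedBall.diff hAmeas)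
        (hfInt.mono_set hAsub) (hfInt.mono_set diff_subset), Set.union_diff_cancel hAsub]
    rw [hunion]
    exact add_le_add hIAup hannulus
  rw [← hPdef, ← hEedef]
  constructor
  · rw [le_div_iff₀ (by positivity)]
    have h1 : Ee * P * (1 - Real.exp (-u) * (2:ℝ) ^ ((d:ℝ)/2)) ≤ r^d * ∫ x in B1, f x := by
      have h2 := mul_le_mul_of_nonneg_left hIlow hrd.le
      have h3 : r^d * (Ee * (P / r^d - Real.exp (-u) * ((2:ℝ) ^ ((d:ℝ)/2) * (P / r^d))))
          = Ee * P * (1 - Real.exp (-u) * (2:ℝ) ^ ((d:ℝ)/2)) := by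
        field_simp
      rw [h3] at h2
      exact h2
    have hprod : 0 ≤ Ee * P * (1/2 - Real.exp (-u) * (2:ℝ) ^ ((d:ℝ)/2)) :=
      mul_nonneg (by positivity) (by linarith)
    nlinarith [h1, hprod]
  · rw [div_le_iff₀ (by positivity)]
    have h1 : r^d * (∫ x in B1, f x)
        ≤ Ee * P * (1 + Real.exp (-u) * (2/α^2 : ℝ) ^ ((d:ℝ)/2)) := by
      have h2 := mul_le_mul_of_nonneg_left hIup hrd.le
      have h3 : r^d * (Ee * (P / r^d)
            + Ee * (Real.exp (-u) * ((2/α^2 : ℝ) ^ ((d:ℝ)/2) * (P / r^d))))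
          = Ee * P * (1 + Real.exp (-u) * (2/α^2 : ℝ) ^ ((d:ℝ)/2)) := by
        field_simp
      rw [h3] at h2
      exact h2
    have hprod : 0 ≤ Ee * P * (1 - Real.exp (-u) * (2/α^2 : ℝ) ^ ((d:ℝ)/2)) :=
      mul_nonneg (by positivity) (by linarith)
    nlinarith [h1, hprod]
end
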